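/- arXiv:2009.13811 — 2 statements merged into one kernel-verified Lean document; each statement's English description precedes it below -/
import Mathlib

section
/- Let u : ℝ × ℝ → ℝ be twice continuously differentiable and satisfy (1 + F·a/(1+b·u)²)·∂u/∂t + v·∂u/∂x = 0 with a, b, F, v > 0 and u ≥ 0. Then setting w = u + F·a·u/(1+b·u), one has ∂²w/∂t² = v²·u_xx/(1 + F·a/(1+b·u)²) + 2·v²·F·a·b·(1+b·u)·(u_x)²/((1+b·u)² + F·a)². -/
set_option maxHeartbeats 1000000


theorem stmt3 (a b F v : ℝ) (ha : 0 < a) (hb : 0 < b) (hF : 0 < F) (hv : 0 < v)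
    (u : ℝ → ℝ → ℝ) (hu : ContDiff ℝ 2 (Function.uncurry u))
    (hpos : ∀ x t, 0 ≤ u x t)
    (hpde : ∀ x t, (1 + F * a / (1 + b * u x t) ^ 2) * deriv (fun s => u x s) t
        + v * deriv (fun y => u y t) x = 0) :
    ∀ x t,
      deriv (fun s => deriv (fun r => u x r + F * a * u x r / (1 + b * u x r)) s) t
        = v ^ 2 * deriv (fun y => deriv (fun y' => u y' t) y) x / (1 + F * a / (1 + b * u x t) ^ 2)
          + 2 * v ^ 2 * F * a * b * (1 + b * u x t) * (deriv (fun y => u y t) x) ^ 2 /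
            ((1 + b * u x t) ^ 2 + F * a) ^ 2 := by
  intro x t
  have hf1 : Differentiable ℝ (Function.uncurry u) :=
    (hu.of_le (m := 1) (by norm_num)).differentiable (by norm_num)
  set f : ℝ × ℝ → ℝ := Function.uncurry u with hfdef
  have hfd : ∀ p : ℝ × ℝ, HasFDerivAt f (fderiv ℝ f p) p := fun p => (hf1 p).hasFDerivAt
  have hf' : ContDiff ℝ 1 (fderiv ℝ f) := hu.fderiv_right (by norm_num)
  have hfd' : ∀ p : ℝ × ℝ, HasFDerivAt (fderiv ℝ f) (fderiv ℝ (fderiv ℝ f) p) p :=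
    fun p => ((hf'.differentiable (by norm_num)) p).hasFDerivAt
  have hline_x : ∀ (x t : ℝ), HasDerivAt (fun y : ℝ => ((y, t) : ℝ × ℝ)) ((1 : ℝ), (0 : ℝ)) x :=
    fun x t => (hasDerivAt_id x).prodMk (hasDerivAt_const x t)
  have hline_t : ∀ (x t : ℝ), HasDerivAt (fun s : ℝ => ((x, s) : ℝ × ℝ)) ((0 : ℝ), (1 : ℝ)) t :=
    fun x t => (hasDerivAt_const t x).prodMk (hasDerivAt_id t)
  set ux : ℝ → ℝ → ℝ := fun x t => fderiv ℝ f (x, t) (1, 0) with huxdef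
  set ut : ℝ → ℝ → ℝ := fun x t => fderiv ℝ f (x, t) (0, 1) with hutdef
  have hux : ∀ x t : ℝ, HasDerivAt (fun y => u y t) (ux x t) x := by
    intro x t
    have h := (hfd (x, t)).comp_hasDerivAt x (hline_x x t)
    simpa [hfdef, Function.uncurry, Function.comp_def] using h
  have hut : ∀ x t : ℝ, HasDerivAt (fun s => u x s) (ut x t) t := by
    intro x t
    have h := (hfd (x, t)).comp_hasDerivAt t (hline_t x t)
    simpa [hfdef, Function.uncurry, Function.comp_def] using h
  have hdux : ∀ x t, deriv (fun y => u y t) x = ux x t := fun x t => (hux x t).deriv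
  have hdut : ∀ x t, deriv (fun s => u x s) t = ut x t := fun x t => (hut x t).deriv
  have hc : ∀ x t, (0 : ℝ) < 1 + b * u x t := by
    intro x t; nlinarith [hpos x t]
  have hD : ∀ x t, (0 : ℝ) < 1 + F * a / (1 + b * u x t) ^ 2 := by
    intro x t
    have h1 := hc x t
    positivity
  have hPDE : ∀ x t, (1 + F * a / (1 + b * u x t) ^ 2) * ut x t + v * ux x t = 0 := by
    intro x t
    have h := hpde x t
    rwa [hdut, hdux] at h
  -- time derivative of w is -v * ux
  have hwts : ∀ x s, HasDerivAt (fun r => u x r + F * a * u x r / (1 + b * u x r))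
      (-v * ux x s) s := by
    intro x s
    have h1 := hc x s
    have hu1 : HasDerivAt (fun r => u x r) (ut x s) s := hut x s
    have hnum : HasDerivAt (fun r => F * a * u x r) (F * a * ut x s) s := hu1.const_mul _
    have hden : HasDerivAt (fun r => 1 + b * u x r) (b * ut x s) s := by
      simpa using (hu1.const_mul b).const_add 1
    have hdiv := hnum.fun_div hden h1.ne'
    have htot := hu1.fun_add hdiv
    refine htot.congr_deriv (Eq.symm ?_)
    have h2 : (F * a * ut x s * (1 + b * u x s) - F * a * u x s * (b * ut x s))
        / (1 + b * u x s) ^ 2 = F * a * ut x s / (1 + b * u x s) ^ 2 := by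
      rw [div_eq_div_iff (by positivity) (by positivity)]
      ring
    rw [h2]
    have hp := hPDE x s
    linear_combination -(1:ℝ) * hp
  have hLHSfun : (fun s => deriv (fun r => u x r + F * a * u x r / (1 + b * u x r)) s)
      = fun s => -v * ux x s := by
    funext s; exact (hwts x s).deriv
  -- second partials
  set f'' := fderiv ℝ (fderiv ℝ f) (x, t) with hf''def
  have hsymm : ∀ p q : ℝ × ℝ, f'' p q = f'' q p :=
    second_derivative_symmetric hfd (hfd' (x, t))
  have hux_t : HasDerivAt (fun s => ux x s) (f'' (0, 1) (1, 0)) t := by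
    have h := (hfd' (x, t)).comp_hasDerivAt t (hline_t x t)
    have h2 := h.clm_apply (hasDerivAt_const t ((1 : ℝ), (0 : ℝ)))
    simpa using h2
  have hut_x : HasDerivAt (fun y => ut y t) (f'' (1, 0) (0, 1)) x := by
    have h := (hfd' (x, t)).comp_hasDerivAt x (hline_x x t)
    have h2 := h.clm_apply (hasDerivAt_const x ((0 : ℝ), (1 : ℝ)))
    simpa using h2
  have hux_x : HasDerivAt (fun y => ux y t) (f'' (1, 0) (1, 0)) x := by
    have h := (hfd' (x, t)).comp_hasDerivAt x (hline_x x t)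
    have h2 := h.clm_apply (hasDerivAt_const x ((1 : ℝ), (0 : ℝ)))
    simpa using h2
  set utx := f'' (1, 0) (0, 1) with hutxdef
  set uxx := f'' (1, 0) (1, 0) with huxxdef
  -- differentiate the PDE in x
  have hbig : HasDerivAt (fun y => (1 + F * a / (1 + b * u y t) ^ 2) * ut y t + v * ux y t)
      ((-(F * a * (2 * (1 + b * u x t) * (b * ux x t))) / ((1 + b * u x t) ^ 2) ^ 2) * ut x t
        + (1 + F * a / (1 + b * u x t) ^ 2) * utx + v * uxx) x := by
    have h1 := hc x t
    have hden : HasDerivAt (fun y => (1 + b * u y t) ^ 2)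
        (2 * (1 + b * u x t) ^ 1 * (b * ux x t)) x := by
      have := ((hux x t).const_mul b).const_add 1
      simpa using this.fun_pow 2
    have hfrac : HasDerivAt (fun y => F * a / (1 + b * u y t) ^ 2)
        ((0 * (1 + b * u x t) ^ 2 - F * a * (2 * (1 + b * u x t) ^ 1 * (b * ux x t)))
          / ((1 + b * u x t) ^ 2) ^ 2) x :=
      (hasDerivAt_const x (F * a)).div hden (by positivity)
    have hD1 : HasDerivAt (fun y => 1 + F * a / (1 + b * u y t) ^ 2)
        ((0 * (1 + b * u x t) ^ 2 - F * a * (2 * (1 + b * u x t) ^ 1 * (b * ux x t)))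
          / ((1 + b * u x t) ^ 2) ^ 2) x := hfrac.const_add 1
    have hmul := hD1.fun_mul (hut_x)
    have htot := hmul.fun_add ((hux_x).const_mul v)
    refine htot.congr_deriv (Eq.symm ?_)
    ring
  have hE : (-(F * a * (2 * (1 + b * u x t) * (b * ux x t))) / ((1 + b * u x t) ^ 2) ^ 2) * ut x t
        + (1 + F * a / (1 + b * u x t) ^ 2) * utx + v * uxx = 0 := by
    have hzero : (fun y => (1 + F * a / (1 + b * u y t) ^ 2) * ut y t + v * ux y t)
        = fun _ : ℝ => (0 : ℝ) := by
      funext y; exact hPDE y t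
    have hbig' : HasDerivAt (fun _ : ℝ => (0 : ℝ)) _ x := hzero ▸ hbig
    exact hbig'.unique (hasDerivAt_const x 0)
  -- compute both sides
  rw [hLHSfun]
  have hL : HasDerivAt (fun s => -v * ux x s) (-v * f'' (0, 1) (1, 0)) t :=
    hux_t.const_mul (-v)
  rw [hL.deriv]
  have hRfun : (fun y => deriv (fun y' => u y' t) y) = fun y => ux y t := by
    funext y; exact hdux y t
  rw [hRfun, hux_x.deriv, hdux]
  rw [hsymm (0, 1) (1, 0), ← hutxdef]
  -- final algebra
  have h1 := hc x t
  have hq := hPDE x t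
  have hc2 : (0 : ℝ) < (1 + b * u x t) ^ 2 + F * a := by positivity
  field_simp at hE hq ⊢
  have hE' : -2 * (F * a) * b * (ux x t) * (ut x t)
      + ((1 + b * u x t) ^ 2 + F * a) * utx * (1 + b * u x t)
      + v * uxx * (1 + b * u x t) ^ 3 = 0 := by
    apply mul_left_cancel₀ (pow_ne_zero 3 h1.ne')
    rw [mul_zero]
    linear_combination (1 + b * u x t) ^ 3 * hE
  apply mul_left_cancel₀ h1.ne'
  linear_combination (-((1 + b * u x t) ^ 2 + F * a)) * hE'
    + (-2 * F * a * b * (ux x t)) * hq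
end

section
/- Let A = (∂q_i/∂u_j) be the Jacobian of the two-component Langmuir isotherm q_i(u₁,u₂) = a_i u_i/(1+b₁u₁+b₂u₂) at a point with u₁, u₂ ≥ 0 and a_i, b_i > 0. Then both eigenvalues of A are real and positive. -/
open Polynomial in
theorem charpoly_fin_two' (M : Matrix (Fin 2) (Fin 2) ℝ) :
    M.charpoly = X ^ 2 - C M.trace * X + C M.det := by
  rw [Matrix.charpoly, Matrix.det_fin_two, Matrix.trace_fin_two, Matrix.det_fin_two]
  rw [Matrix.charmatrix_apply_eq, Matrix.charmatrix_apply_eq,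
    Matrix.charmatrix_apply_ne _ _ _ (by decide), Matrix.charmatrix_apply_ne _ _ _ (by decide)]
  simp only [map_add, map_mul, map_sub]
  ring

theorem stmt13 (a₁ a₂ b₁ b₂ u₁ u₂ : ℝ) (ha₁ : 0 < a₁) (ha₂ : 0 < a₂)
    (hb₁ : 0 < b₁) (hb₂ : 0 < b₂) (hu₁ : 0 ≤ u₁) (hu₂ : 0 ≤ u₂) :
    ∀ A : Matrix (Fin 2) (Fin 2) ℝ,
      A = !![deriv (fun s => a₁ * s / (1 + b₁ * s + b₂ * u₂)) u₁,
             deriv (fun s => a₁ * u₁ / (1 + b₁ * u₁ + b₂ * s)) u₂;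
             deriv (fun s => a₂ * u₂ / (1 + b₁ * s + b₂ * u₂)) u₁,
             deriv (fun s => a₂ * s / (1 + b₁ * u₁ + b₂ * s)) u₂] →
      ∃ μ₁ μ₂ : ℝ, 0 < μ₁ ∧ 0 < μ₂ ∧
        A.charpoly = (Polynomial.X - Polynomial.C μ₁) * (Polynomial.X - Polynomial.C μ₂) := by
  intro A hA
  set D : ℝ := 1 + b₁ * u₁ + b₂ * u₂ with hDdef
  have hD : 0 < D := by positivity
  have hD0 : D ≠ 0 := ne_of_gt hD
  -- derivatives
  have hden1 : HasDerivAt (fun s : ℝ => 1 + b₁ * s + b₂ * u₂) b₁ u₁ := by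
    simpa using (((hasDerivAt_id u₁).const_mul b₁).const_add 1).add_const (b₂ * u₂)
  have hden2 : HasDerivAt (fun s : ℝ => 1 + b₁ * u₁ + b₂ * s) b₂ u₂ := by
    simpa using ((hasDerivAt_id u₂).const_mul b₂).const_add (1 + b₁ * u₁)
  have h11 : deriv (fun s => a₁ * s / (1 + b₁ * s + b₂ * u₂)) u₁
      = a₁ * (1 + b₂ * u₂) / D ^ 2 := by
    have h := (((hasDerivAt_id u₁).const_mul a₁).div hden1 hD0).deriv
    simp only [id_eq, Pi.div_def] at h
    rw [h]; field_simp; try ring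
  have h12 : deriv (fun s => a₁ * u₁ / (1 + b₁ * u₁ + b₂ * s)) u₂
      = -(a₁ * u₁ * b₂) / D ^ 2 := by
    have h := ((hasDerivAt_const u₂ (a₁ * u₁)).div hden2 hD0).deriv
    simp only [Pi.div_def] at h
    rw [h]; field_simp; try ring
  have h21 : deriv (fun s => a₂ * u₂ / (1 + b₁ * s + b₂ * u₂)) u₁
      = -(a₂ * u₂ * b₁) / D ^ 2 := by
    have h := ((hasDerivAt_const u₁ (a₂ * u₂)).div hden1 hD0).deriv
    simp only [Pi.div_def] at h
    rw [h]; field_simp; try ring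
  have h22 : deriv (fun s => a₂ * s / (1 + b₁ * u₁ + b₂ * s)) u₂
      = a₂ * (1 + b₁ * u₁) / D ^ 2 := by
    have h := (((hasDerivAt_id u₂).const_mul a₂).div hden2 hD0).deriv
    simp only [id_eq, Pi.div_def] at h
    rw [h]; field_simp; try ring
  -- trace and determinant
  have htr : A.trace = (a₁ * (1 + b₂ * u₂) + a₂ * (1 + b₁ * u₁)) / D ^ 2 := by
    rw [hA, Matrix.trace_fin_two]
    simp only [Matrix.cons_val_zero, Matrix.cons_val_one, Matrix.head_cons, Matrix.head_fin_const,
      Matrix.cons_val', Matrix.empty_val', Matrix.cons_val_fin_one, Matrix.of_apply, h11, h22]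
    field_simp
    try ring
  have hdet : A.det = a₁ * a₂ / D ^ 3 := by
    rw [hA, Matrix.det_fin_two]
    simp only [Matrix.cons_val_zero, Matrix.cons_val_one, Matrix.head_cons, Matrix.head_fin_const,
      Matrix.cons_val', Matrix.empty_val', Matrix.cons_val_fin_one, Matrix.of_apply, h11, h12, h21, h22]
    field_simp
    try ring
  set T : ℝ := (a₁ * (1 + b₂ * u₂) + a₂ * (1 + b₁ * u₁)) / D ^ 2 with hTdef
  set d : ℝ := a₁ * a₂ / D ^ 3 with hddef
  have hT : 0 < T := by positivity
  have hd : 0 < d := by positivity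
  have hdisc : 0 ≤ T ^ 2 - 4 * d := by
    have key : T ^ 2 - 4 * d
        = ((a₁ * (1 + b₂ * u₂) - a₂ * (1 + b₁ * u₁)) ^ 2
            + 4 * (a₁ * a₂ * b₁ * b₂ * u₁ * u₂)) / D ^ 4 := by
      rw [hTdef, hddef]; field_simp; ring
    rw [key]; positivity
  set s : ℝ := Real.sqrt (T ^ 2 - 4 * d) with hsdef
  have hs0 : 0 ≤ s := Real.sqrt_nonneg _
  have hs2 : s ^ 2 = T ^ 2 - 4 * d := Real.sq_sqrt hdisc
  have hsT : s < T := by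
    nlinarith [hs2, hd, hT, hs0]
  refine ⟨(T + s) / 2, (T - s) / 2, by linarith, by linarith, ?_⟩
  have hsum : (T + s) / 2 + (T - s) / 2 = A.trace := by rw [htr]; ring
  have hprod : ((T + s) / 2) * ((T - s) / 2) = A.det := by
    rw [hdet]
    have : ((T + s) / 2) * ((T - s) / 2) = (T ^ 2 - s ^ 2) / 4 := by ring
    rw [this, hs2]; ring
  rw [charpoly_fin_two', ← hsum, ← hprod]
  simp only [map_add, map_mul]
  ring
end
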